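/- The function ρ_{p,q}(x,y) = |x−y| / A_p(|x|,|y|)^q with q > 1 and p > 0 fails the triangle inequality on ℝ: there exist x,y,z ∈ ℝ with |x−y|/A_p(|x|,|y|)^q > |x−z|/A_p(|x|,|z|)^q + |z−y|/A_p(|z|,|y|)^q. -/

import Mathlib

/-- For `q > 1` and `p > 0`, `ρ_{p,q}` fails the triangle inequality on `ℝ`. -/
theorem stmt_13 (p q : ℝ) (hp : 0 < p) (hq : 1 < q) :
    ∃ x y z : ℝ,
      |x - z| / ((|x| ^ p + |z| ^ p) / 2) ^ (q / p)
        + |z - y| / ((|z| ^ p + |y| ^ p) / 2) ^ (q / p)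
      < |x - y| / ((|x| ^ p + |y| ^ p) / 2) ^ (q / p) := by
  have hq0 : (0:ℝ) < q := lt_trans one_pos hq
  have hr0 : 0 < q / p := div_pos hq0 hp
  set D : ℝ := 2 ^ (q / p) with hD
  have hD0 : 0 < D := Real.rpow_pos_of_pos two_pos _
  have hq1 : 0 < q - 1 := by linarith
  set z : ℝ := 2 ^ ((1:ℝ) / (q - 1)) + 1 with hzdef
  have ha : (0:ℝ) < 2 ^ ((1:ℝ) / (q - 1)) := Real.rpow_pos_of_pos two_pos _
  have hz1 : 1 < z := by simp only [hzdef]; linarith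
  have hz0 : 0 < z := by linarith
  have hzq : 2 < z ^ (q - 1) := by
    have h1 : (2 ^ ((1:ℝ) / (q - 1))) ^ (q - 1) < z ^ (q - 1) :=
      Real.rpow_lt_rpow ha.le (by simp only [hzdef]; linarith) hq1
    rwa [← Real.rpow_mul (by norm_num : (0:ℝ) ≤ 2),
      one_div, inv_mul_cancel₀ hq1.ne', Real.rpow_one] at h1
  refine ⟨1, 0, z, ?_⟩
  have hzp : (0:ℝ) < z ^ p := Real.rpow_pos_of_pos hz0 p
  have hzq0 : (0:ℝ) < z ^ q := Real.rpow_pos_of_pos hz0 q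
  have habs : |z| = z := abs_of_pos hz0
  have h0p : (0:ℝ) ^ p = 0 := Real.zero_rpow hp.ne'
  have h1p : |(1:ℝ)| ^ p = 1 := by rw [abs_one, Real.one_rpow]
  have hden2 : ((z ^ p) / 2) ^ (q / p) = z ^ q / D := by
    rw [Real.div_rpow hzp.le (by norm_num), ← Real.rpow_mul hz0.le,
      mul_div_cancel₀ q hp.ne']
  -- RHS equals D
  have hRHS : |(1:ℝ) - 0| / ((|(1:ℝ)| ^ p + |(0:ℝ)| ^ p) / 2) ^ (q / p) = D := by
    rw [abs_zero, h0p, h1p, sub_zero, abs_one, add_zero, one_div 2,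
      Real.inv_rpow (by norm_num : (0:ℝ) ≤ 2), one_div, inv_inv]
  rw [hRHS]
  have hterm2 : |z - 0| / ((|z| ^ p + |(0:ℝ)| ^ p) / 2) ^ (q / p) = z * D / z ^ q := by
    rw [abs_zero, h0p, habs, sub_zero, abs_of_pos hz0, add_zero, hden2,
      div_div_eq_mul_div]
  have hterm1 : |1 - z| / ((|(1:ℝ)| ^ p + |z| ^ p) / 2) ^ (q / p) ≤ z * D / z ^ q := by
    have h1 : |1 - z| ≤ z := by rw [abs_sub_comm, abs_of_pos (by linarith)]; linarith
    have h2 : z ^ q / D ≤ ((|(1:ℝ)| ^ p + |z| ^ p) / 2) ^ (q / p) := by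
      rw [← hden2, h1p, habs]
      exact Real.rpow_le_rpow (by positivity) (by linarith) hr0.le
    calc |1 - z| / ((|(1:ℝ)| ^ p + |z| ^ p) / 2) ^ (q / p)
        ≤ z / (z ^ q / D) := div_le_div₀ hz0.le h1 (by positivity) h2
      _ = z * D / z ^ q := by rw [div_div_eq_mul_div]
  have hkey : z * D / z ^ q + z * D / z ^ q < D := by
    rw [← add_div, div_lt_iff₀ hzq0]
    have hzz : z ^ (q - 1) * z = z ^ q := by
      rw [← Real.rpow_add_one hz0.ne']; ring_nf
    rw [← hzz]
    have h2z : 2 * z < z ^ (q - 1) * z := by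
      exact mul_lt_mul_of_pos_right hzq hz0
    nlinarith [hD0]
  calc |1 - z| / ((|(1:ℝ)| ^ p + |z| ^ p) / 2) ^ (q / p)
        + |z - 0| / ((|z| ^ p + |(0:ℝ)| ^ p) / 2) ^ (q / p)
      ≤ z * D / z ^ q + z * D / z ^ q := by rw [hterm2]; exact add_le_add hterm1 le_rfl
    _ < D := hkey
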